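/- With notation as in the context, the following hold. (1) K and L are maps of matrix factorizations: D⁰∘K₀ = K₁∘f_x, D¹∘K₁ = K₀∘g_x, L₁∘D⁰ = f_x∘L₀, and L₀∘D¹ = g_x∘L₁ (where f_x and g_x act on Aᵐ by matrix multiplication). (2) L₀∘K₀ = id_{Aᵐ} and L₁∘K₁ = id_{Aᵐ}. (3) H is a homotopy exhibiting K∘L as homotopic to the identity: id_{N⁰} − K₀∘L₀ = H₁∘D⁰ + D¹∘H₀ and id_{N¹} − K₁∘L₁ = D⁰∘H₁ + H₀∘D¹. In particular the matrix factorization (Aᵐ, f_x, g_x) obtained by removing the mark is homotopy equivalent to N. -/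

import Mathlib

set_option synthInstance.maxHeartbeats 1000000
set_option maxHeartbeats 1000000


noncomputable section

namespace MF18

variable (r m : ℕ)

/-- `S = ℂ[x₁,…,x_r]`. -/
abbrev S := MvPolynomial (Fin r) ℂ

/-- `A = S[x]`.  (Note that `A` is also used as the ring `S[y]` of polynomials in the
single variable `y` over `S`, which is the same ring with the variable renamed.) -/
abbrev A := Polynomial (S r)

/-- `B = S[x,y]`, realized as `S[x][y]`: the outer variable is `y`, the inner one is `x`. -/
abbrev B := Polynomial (A r)

/-- The element `x ∈ B`. -/
def x : B r := Polynomial.C Polynomial.X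

/-- The element `y ∈ B`. -/
def y : B r := Polynomial.X

/-- `σ : B → B`, the `S`-algebra homomorphism fixing `x` and sending `y` to `x`. -/
def σ : B r →+* B r :=
  (Polynomial.C : A r →+* B r).comp (Polynomial.evalRingHom (Polynomial.X : A r))

/-- `σ` applied entrywise to vectors. -/
def σv (u : Fin m → B r) : Fin m → B r := fun i => σ r (u i)

/-- The inclusion `S[y] → B = S[x][y]` (the variable of `A = S[y]` goes to `y`). -/
def ofY : A r →+* B r := Polynomial.mapRingHom (Polynomial.C : S r →+* A r)

/-- The inclusion `A = S[x] → B = S[x][y]` as constants in `y`.  Composing a polynomial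
in `S[y]` (an element of `A`) with this map realizes the substitution `y ↦ x`. -/
def ofA : A r →+* B r := Polynomial.C

/-- `D⁰ : N⁰ → N¹`, `(u,v) ↦ (f·u − (x−y)·v, π·u + g·v)` (with `f`, `g` regarded as
matrices over `B` in the variable `y`). -/
def D0 (f g : Matrix (Fin m) (Fin m) (A r)) (π : B r)
    (uv : (Fin m → B r) × (Fin m → B r)) : (Fin m → B r) × (Fin m → B r) :=
  ((f.map (ofY r)).mulVec uv.1 - (x r - y r) • uv.2,
    π • uv.1 + (g.map (ofY r)).mulVec uv.2)

/-- `D¹ : N¹ → N⁰`, `(u,v) ↦ (g·u + (x−y)·v, −π·u + f·v)`. -/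
def D1 (f g : Matrix (Fin m) (Fin m) (A r)) (π : B r)
    (uv : (Fin m → B r) × (Fin m → B r)) : (Fin m → B r) × (Fin m → B r) :=
  ((g.map (ofY r)).mulVec uv.1 + (x r - y r) • uv.2,
    -(π • uv.1) + (f.map (ofY r)).mulVec uv.2)

/-- `K₀ : Aᵐ → N⁰`, `v ↦ (v, −((f_x−f)/(x−y))·v)`, where `qf = (f_x−f)/(x−y)`. -/
def K0 (qf : Matrix (Fin m) (Fin m) (B r)) (v : Fin m → A r) :
    (Fin m → B r) × (Fin m → B r) :=
  (fun i => ofA r (v i), -(qf.mulVec fun i => ofA r (v i)))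

/-- `K₁ : Aᵐ → N¹`, `v ↦ (v, ((g_x−g)/(x−y))·v)`, where `qg = (g_x−g)/(x−y)`. -/
def K1 (qg : Matrix (Fin m) (Fin m) (B r)) (v : Fin m → A r) :
    (Fin m → B r) × (Fin m → B r) :=
  (fun i => ofA r (v i), qg.mulVec fun i => ofA r (v i))

/-- `L₀ : N⁰ → Aᵐ`, `(u,v) ↦ σ(u)`. -/
def L0 (uv : (Fin m → B r) × (Fin m → B r)) : Fin m → A r :=
  fun i => Polynomial.eval (Polynomial.X : A r) (uv.1 i)

/-- `L₁ : N¹ → Aᵐ`, `(u,v) ↦ σ(u)`. -/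
def L1 (uv : (Fin m → B r) × (Fin m → B r)) : Fin m → A r :=
  fun i => Polynomial.eval (Polynomial.X : A r) (uv.1 i)

open Polynomial
lemma xy_ne : x r - y r ≠ 0 := by
  intro h
  have := congrArg (fun p => Polynomial.coeff p 1) h
  simp [x, y] at this

lemma eval_ofY (a : A r) : Polynomial.eval (Polynomial.X : A r) (ofY r a) = a := by
  simp [ofY, Polynomial.eval_map, Polynomial.eval₂_C_X]

lemma eval_ofA (a : A r) : Polynomial.eval (Polynomial.X : A r) (ofA r a) = a := by
  simp [ofA]

lemma sigma_ofY (a : A r) : σ r (ofY r a) = ofA r a := by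
  simp [σ, ofA, eval_ofY]

lemma eval_xy : Polynomial.eval (Polynomial.X : A r) (x r - y r) = 0 := by
  simp [x, y]

lemma ofA_aeval (w : Polynomial ℂ) :
    ofA r (Polynomial.aeval (Polynomial.X : A r) w) = Polynomial.aeval (x r) w := by
  have := Polynomial.aeval_algHom_apply (Polynomial.CAlgHom (R := ℂ) (A := A r)) (Polynomial.X : A r) w
  simpa [ofA, x, Polynomial.CAlgHom] using this.symm

lemma ofY_aeval (w : Polynomial ℂ) :
    ofY r (Polynomial.aeval (Polynomial.X : A r) w) = Polynomial.aeval (y r) w := by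
  have := Polynomial.aeval_algHom_apply (Polynomial.mapAlgHom (Polynomial.CAlgHom (R := ℂ) (A := S r))) (Polynomial.X : A r) w
  simpa [ofY, y, Polynomial.mapAlgHom, Polynomial.CAlgHom] using this.symm

lemma ofA_eval (b : B r) : ofA r (Polynomial.eval (Polynomial.X : A r) b) = σ r b := rfl

lemma sigma_xy : σ r (x r - y r) = 0 := by
  simp [σ, x, y]

lemma smul_cancel_vec {a b : Fin m → B r} (h : (x r - y r) • a = (x r - y r) • b) : a = b := by
  funext i
  have := congrFun h i
  simp only [Pi.smul_apply, smul_eq_mul] at this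
  exact mul_left_cancel₀ (xy_ne r) this

lemma smul_cancel_mat {a b : Matrix (Fin m) (Fin m) (B r)} (h : (x r - y r) • a = (x r - y r) • b) : a = b := by
  refine Matrix.ext fun i j => ?_
  have := congrArg (fun M : Matrix (Fin m) (Fin m) (B r) => M i j) h
  simp only [Matrix.smul_apply, smul_eq_mul] at this
  exact mul_left_cancel₀ (xy_ne r) this

lemma map_smul_one (φ : A r →+* B r) (a : A r) :
    ((a • (1 : Matrix (Fin m) (Fin m) (A r))).map φ) = φ a • (1 : Matrix (Fin m) (Fin m) (B r)) := by
  ext i j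
  by_cases h : i = j <;> simp [Matrix.map_apply, Matrix.one_apply, h]

lemma ofA_mulVec (M : Matrix (Fin m) (Fin m) (A r)) (v : Fin m → A r) :
    (fun i => ofA r (M.mulVec v i)) = (M.map (ofA r)).mulVec (fun i => ofA r (v i)) := by
  funext i
  simp [Matrix.mulVec, dotProduct, map_sum, Matrix.map_apply]

lemma eval_mulVec (M : Matrix (Fin m) (Fin m) (B r)) (u : Fin m → B r) :
    (fun i => Polynomial.eval (Polynomial.X : A r) (M.mulVec u i)) =
      (M.map (Polynomial.evalRingHom (Polynomial.X : A r))).mulVec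
        (fun i => Polynomial.eval (Polynomial.X : A r) (u i)) := by
  funext i
  simp [Matrix.mulVec, dotProduct, Polynomial.eval_finset_sum, Matrix.map_apply]

lemma sigmav_mulVec (M : Matrix (Fin m) (Fin m) (B r)) (u : Fin m → B r) :
    (fun i => σ r (M.mulVec u i)) = (M.map (σ r)).mulVec (fun i => σ r (u i)) := by
  funext i
  simp [Matrix.mulVec, dotProduct, map_sum, Matrix.map_apply]

lemma mapY_eval (f : Matrix (Fin m) (Fin m) (A r)) :
    (f.map (ofY r)).map (Polynomial.evalRingHom (Polynomial.X : A r)) = f := by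
  ext i j; simp [Matrix.map_apply, eval_ofY]

lemma mapY_sigma (f : Matrix (Fin m) (Fin m) (A r)) :
    (f.map (ofY r)).map (σ r) = f.map (ofA r) := by
  ext i j; simp [Matrix.map_apply, sigma_ofY]

instance : SMulCommClass (B r) (B r) (B r) := ⟨fun a b c => mul_left_comm a b c⟩

lemma key (w : Polynomial ℂ) (c : S r)
    (f g : Matrix (Fin m) (Fin m) (A r))
    (hgf : g * f = (Polynomial.C c + Polynomial.aeval (Polynomial.X : A r) w) •
      (1 : Matrix (Fin m) (Fin m) (A r)))
    (π : B r)
    (hπ : (x r - y r) * π = Polynomial.aeval (x r) w - Polynomial.aeval (y r) w)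
    (qf qg : Matrix (Fin m) (Fin m) (B r))
    (hqf : (x r - y r) • qf = f.map (ofA r) - f.map (ofY r))
    (hqg : (x r - y r) • qg = g.map (ofA r) - g.map (ofY r)) :
    qg * f.map (ofA r) = π • 1 - (g.map (ofY r)) * qf := by
  apply smul_cancel_mat r m
  have hGF : (g.map (ofY r)) * (f.map (ofY r)) =
      ofY r (Polynomial.C c + Polynomial.aeval (Polynomial.X : A r) w) • 1 := by
    rw [← Matrix.map_mul, hgf, map_smul_one]
  have hGxFx : (g.map (ofA r)) * (f.map (ofA r)) =
      ofA r (Polynomial.C c + Polynomial.aeval (Polynomial.X : A r) w) • 1 := by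
    rw [← Matrix.map_mul, hgf, map_smul_one]
  have hcc : ofA r (Polynomial.C c) = ofY r (Polynomial.C c) := by simp [ofA, ofY]
  rw [map_add, hcc, ofA_aeval] at hGxFx
  rw [map_add, ofY_aeval] at hGF
  calc (x r - y r) • (qg * f.map (ofA r))
      = ((x r - y r) • qg) * f.map (ofA r) := by
        rw [smul_mul_assoc (x r - y r) qg (f.map (ofA r))]
    _ = (g.map (ofA r)) * (f.map (ofA r)) - (g.map (ofY r)) * (f.map (ofA r)) := by
        rw [hqg, Matrix.sub_mul (g.map (ofA r)) (g.map (ofY r)) (f.map (ofA r))]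
    _ = (x r - y r) • (π • 1 - (g.map (ofY r)) * qf) := by
        rw [smul_sub (x r - y r) (π • (1 : Matrix (Fin m) (Fin m) (B r)))
            ((g.map (ofY r)) * qf),
          smul_smul (x r - y r) π (1 : Matrix (Fin m) (Fin m) (B r)), hπ,
          ← mul_smul_comm (x r - y r) (g.map (ofY r)) qf, hqf,
          Matrix.mul_sub (g.map (ofY r)) (f.map (ofA r)) (f.map (ofY r)),
          hGxFx, hGF]
        module

instance : IsRightCancelAdd (B r) :=
  ⟨fun a b c h => by
    have h2 := congrArg (fun z => z + (-a)) h
    simp only at h2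
    rwa [add_neg_cancel_right b a, add_neg_cancel_right c a] at h2⟩

lemma sigmav_eq (u : Fin m → B r) :
    (fun i => ofA r (Polynomial.eval (Polynomial.X : A r) (u i)))
      = fun i => σ r (u i) := rfl

lemma sigmav_mulVec_sub_smul (f : Matrix (Fin m) (Fin m) (A r)) (u v : Fin m → B r) :
    (fun i => σ r (((f.map (ofY r)).mulVec u - (x r - y r) • v) i)) =
      (f.map (ofA r)).mulVec (fun i => σ r (u i)) := by
  funext i
  show σ r ((f.map (ofY r)).mulVec u i - (x r - y r) * v i) = _
  rw [map_sub (σ r) ((f.map (ofY r)).mulVec u i) ((x r - y r) * v i),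
    map_mul (σ r) (x r - y r) (v i), sigma_xy r,
    zero_mul (σ r (v i)), sub_zero (σ r ((f.map (ofY r)).mulVec u i))]
  have h := congrFun (sigmav_mulVec r m (f.map (ofY r)) u) i
  rw [mapY_sigma] at h
  exact h

lemma sigmav_mulVec_add_smul (g : Matrix (Fin m) (Fin m) (A r)) (u v : Fin m → B r) :
    (fun i => σ r (((g.map (ofY r)).mulVec u + (x r - y r) • v) i)) =
      (g.map (ofA r)).mulVec (fun i => σ r (u i)) := by
  funext i
  show σ r ((g.map (ofY r)).mulVec u i + (x r - y r) * v i) = _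
  rw [map_add (σ r) ((g.map (ofY r)).mulVec u i) ((x r - y r) * v i),
    map_mul (σ r) (x r - y r) (v i), sigma_xy r,
    zero_mul (σ r (v i)), add_zero (σ r ((g.map (ofY r)).mulVec u i))]
  have h := congrFun (sigmav_mulVec r m (g.map (ofY r)) u) i
  rw [mapY_sigma] at h
  exact h


end MF18

open MF18 in
/-- (1) `K` and `L` are maps of matrix factorizations; (2) `L∘K` is the
identity of the mark-free factorization `(Aᵐ, f_x, g_x)`; (3) `H` is a homotopy exhibiting
`K∘L` as homotopic to the identity of `N`.  In particular the matrix factorization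
`(Aᵐ, f_x, g_x)` obtained by removing the mark is homotopy equivalent to `N`.
(The homotopy `H₀ (u,v) = (0, (u−σ(u))/(x−y))`, `H₁ (u,v) = (0, (σ(u)−u)/(x−y))` is encoded
through universally quantified witnesses of the indicated exact divisions by `x−y`.) -/
theorem stmt_18 (r m : ℕ) (hm : 1 ≤ m) (w : Polynomial ℂ) (c : S r)
    (f g : Matrix (Fin m) (Fin m) (A r))
    (hfg : f * g = (Polynomial.C c + Polynomial.aeval (Polynomial.X : A r) w) •
      (1 : Matrix (Fin m) (Fin m) (A r)))
    (hgf : g * f = (Polynomial.C c + Polynomial.aeval (Polynomial.X : A r) w) •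
      (1 : Matrix (Fin m) (Fin m) (A r)))
    (π : B r)
    (hπ : (x r - y r) * π = Polynomial.aeval (x r) w - Polynomial.aeval (y r) w)
    (qf qg : Matrix (Fin m) (Fin m) (B r))
    (hqf : (x r - y r) • qf = f.map (ofA r) - f.map (ofY r))
    (hqg : (x r - y r) • qg = g.map (ofA r) - g.map (ofY r)) :
    -- (1) `K` is a map of matrix factorizations: `D⁰∘K₀ = K₁∘f_x`, `D¹∘K₁ = K₀∘g_x`
    (∀ v : Fin m → A r, D0 r m f g π (K0 r m qf v) = K1 r m qg (f.mulVec v)) ∧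
    (∀ v : Fin m → A r, D1 r m f g π (K1 r m qg v) = K0 r m qf (g.mulVec v)) ∧
    -- (1) `L` is a map of matrix factorizations: `L₁∘D⁰ = f_x∘L₀`, `L₀∘D¹ = g_x∘L₁`
    (∀ uv : (Fin m → B r) × (Fin m → B r),
      L1 r m (D0 r m f g π uv) = f.mulVec (L0 r m uv)) ∧
    (∀ uv : (Fin m → B r) × (Fin m → B r),
      L0 r m (D1 r m f g π uv) = g.mulVec (L1 r m uv)) ∧
    -- (2) `L∘K = id`
    (∀ v : Fin m → A r, L0 r m (K0 r m qf v) = v) ∧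
    (∀ v : Fin m → A r, L1 r m (K1 r m qg v) = v) ∧
    -- (3) `id_{N⁰} − K₀∘L₀ = H₁∘D⁰ + D¹∘H₀`
    (∀ u v hu hu' : Fin m → B r,
      (x r - y r) • hu = u - σv r m u →
      (x r - y r) • hu' =
        σv r m ((f.map (ofY r)).mulVec u - (x r - y r) • v) -
          ((f.map (ofY r)).mulVec u - (x r - y r) • v) →
      (u, v) - K0 r m qf (L0 r m (u, v)) =
        ((0 : Fin m → B r), hu') + D1 r m f g π ((0 : Fin m → B r), hu)) ∧
    -- (3) `id_{N¹} − K₁∘L₁ = D⁰∘H₁ + H₀∘D¹`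
    (∀ u v hu₁ hu₃ : Fin m → B r,
      (x r - y r) • hu₁ = σv r m u - u →
      (x r - y r) • hu₃ =
        ((g.map (ofY r)).mulVec u + (x r - y r) • v) -
          σv r m ((g.map (ofY r)).mulVec u + (x r - y r) • v) →
      (u, v) - K1 r m qg (L1 r m (u, v)) =
        D0 r m f g π ((0 : Fin m → B r), hu₁) + ((0 : Fin m → B r), hu₃)) := by
  have key1 := key r m w c f g hgf π hπ qf qg hqf hqg
  have key2 := key r m w c g f hfg π hπ qg qf hqg hqf
  refine ⟨?_, ?_, ?_, ?_, ?_, ?_, ?_, ?_⟩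
  · -- D0 ∘ K0 = K1 ∘ f_x
    intro v
    simp only [D0, K0, K1]
    rw [ofA_mulVec r m f v]
    set v' : Fin m → B r := fun i => ofA r (v i) with hv'
    refine Prod.ext ?_ ?_
    · show (f.map (ofY r)).mulVec v' - (x r - y r) • -(qf.mulVec v') =
        (f.map (ofA r)).mulVec v'
      rw [smul_neg (x r - y r) (qf.mulVec v'),
        sub_neg_eq_add ((f.map (ofY r)).mulVec v') ((x r - y r) • qf.mulVec v'),
        ← Matrix.smul_mulVec (x r - y r) qf v', hqf,
        Matrix.sub_mulVec (f.map (ofA r)) (f.map (ofY r)) v']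
      abel
    · show π • v' + (g.map (ofY r)).mulVec (-(qf.mulVec v')) =
        qg.mulVec ((f.map (ofA r)).mulVec v')
      rw [Matrix.mulVec_mulVec v' qg (f.map (ofA r)), key1,
        Matrix.sub_mulVec (π • (1 : Matrix (Fin m) (Fin m) (B r)))
          ((g.map (ofY r)) * qf) v',
        Matrix.smul_mulVec π (1 : Matrix (Fin m) (Fin m) (B r)) v',
        Matrix.one_mulVec v',
        ← Matrix.mulVec_mulVec v' (g.map (ofY r)) qf,
        Matrix.mulVec_neg (qf.mulVec v') (g.map (ofY r))]
      abel
  · -- D1 ∘ K1 = K0 ∘ g_x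
    intro v
    simp only [D1, K1, K0]
    rw [ofA_mulVec r m g v]
    set v' : Fin m → B r := fun i => ofA r (v i) with hv'
    refine Prod.ext ?_ ?_
    · show (g.map (ofY r)).mulVec v' + (x r - y r) • (qg.mulVec v') =
        (g.map (ofA r)).mulVec v'
      rw [← Matrix.smul_mulVec (x r - y r) qg v', hqg,
        Matrix.sub_mulVec (g.map (ofA r)) (g.map (ofY r)) v']
      abel
    · show -(π • v') + (f.map (ofY r)).mulVec (qg.mulVec v') =
        -(qf.mulVec ((g.map (ofA r)).mulVec v'))
      rw [Matrix.mulVec_mulVec v' qf (g.map (ofA r)), key2,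
        Matrix.sub_mulVec (π • (1 : Matrix (Fin m) (Fin m) (B r)))
          ((f.map (ofY r)) * qg) v',
        Matrix.smul_mulVec π (1 : Matrix (Fin m) (Fin m) (B r)) v',
        Matrix.one_mulVec v',
        ← Matrix.mulVec_mulVec v' (f.map (ofY r)) qg]
      abel
  · -- L1 ∘ D0 = f_x ∘ L0
    intro uv
    funext i
    show Polynomial.eval (Polynomial.X : A r)
        ((f.map (ofY r)).mulVec uv.1 i - (x r - y r) * uv.2 i) = _
    rw [Polynomial.eval_sub ((f.map (ofY r)).mulVec uv.1 i) ((x r - y r) * uv.2 i),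
      Polynomial.eval_mul (p := x r - y r) (q := uv.2 i), eval_xy r,
      zero_mul (Polynomial.eval (Polynomial.X : A r) (uv.2 i)),
      sub_zero (Polynomial.eval (Polynomial.X : A r) ((f.map (ofY r)).mulVec uv.1 i))]
    have h := congrFun (eval_mulVec r m (f.map (ofY r)) uv.1) i
    rw [mapY_eval] at h
    exact h
  · -- L0 ∘ D1 = g_x ∘ L1
    intro uv
    funext i
    show Polynomial.eval (Polynomial.X : A r)
        ((g.map (ofY r)).mulVec uv.1 i + (x r - y r) * uv.2 i) = _
    rw [Polynomial.eval_add (p := (g.map (ofY r)).mulVec uv.1 i) (q := (x r - y r) * uv.2 i),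
      Polynomial.eval_mul (p := x r - y r) (q := uv.2 i), eval_xy r,
      zero_mul (Polynomial.eval (Polynomial.X : A r) (uv.2 i)),
      add_zero (Polynomial.eval (Polynomial.X : A r) ((g.map (ofY r)).mulVec uv.1 i))]
    have h := congrFun (eval_mulVec r m (g.map (ofY r)) uv.1) i
    rw [mapY_eval] at h
    exact h
  · exact fun v => funext fun i => eval_ofA r (v i)
  · exact fun v => funext fun i => eval_ofA r (v i)
  · -- homotopy on N⁰
    intro u v hu hu' h1 h2
    simp only [K0, L0, D1]
    rw [sigmav_eq r m u]
    have hσu : (fun i => σ r (u i)) = σv r m u := rfl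
    rw [hσu]
    refine Prod.ext ?_ ?_
    · show u - σv r m u = 0 + ((g.map (ofY r)).mulVec 0 + (x r - y r) • hu)
      rw [Matrix.mulVec_zero (g.map (ofY r)), h1]
      abel
    · have hσ : σv r m ((f.map (ofY r)).mulVec u - (x r - y r) • v) =
          (f.map (ofA r)).mulVec (σv r m u) :=
        sigmav_mulVec_sub_smul r m f u v
      rw [hσ] at h2
      have hq : (x r - y r) • qf.mulVec (σv r m u) =
          (f.map (ofA r)).mulVec (σv r m u) - (f.map (ofY r)).mulVec (σv r m u) := by
        rw [← Matrix.smul_mulVec (x r - y r) qf (σv r m u), hqf,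
          Matrix.sub_mulVec (f.map (ofA r)) (f.map (ofY r)) (σv r m u)]
      have hq4 : (x r - y r) • (f.map (ofY r)).mulVec hu =
          (f.map (ofY r)).mulVec u - (f.map (ofY r)).mulVec (σv r m u) := by
        rw [← Matrix.mulVec_smul (f.map (ofY r)) (x r - y r) hu, h1,
          Matrix.mulVec_sub (f.map (ofY r)) u (σv r m u)]
      show v - -(qf.mulVec (σv r m u)) = hu' + (-(π • (0 : Fin m → B r)) +
        (f.map (ofY r)).mulVec hu)
      funext i
      have e2 := congrFun h2 i
      have e3 := congrFun hq i
      have e4 := congrFun hq4 i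
      simp only [Pi.smul_apply, Pi.sub_apply, Pi.add_apply, Pi.neg_apply, Pi.zero_apply,
        smul_eq_mul] at e2 e3 e4 ⊢
      refine mul_left_cancel₀ (xy_ne r) ?_
      linear_combination e3 - e2 - e4
  · -- homotopy on N¹
    intro u v hu₁ hu₃ h1 h2
    simp only [K1, L1, D0]
    rw [sigmav_eq r m u]
    have hσu : (fun i => σ r (u i)) = σv r m u := rfl
    rw [hσu]
    refine Prod.ext ?_ ?_
    · show u - σv r m u = ((f.map (ofY r)).mulVec 0 - (x r - y r) • hu₁) + 0
      rw [Matrix.mulVec_zero (f.map (ofY r)), h1]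
      abel
    · show v - qg.mulVec (σv r m u) = (π • (0 : Fin m → B r) +
        (g.map (ofY r)).mulVec hu₁) + hu₃
      rw [smul_zero π, zero_add]
      apply smul_cancel_vec r m
      rw [smul_sub (x r - y r) v (qg.mulVec (σv r m u)),
        ← Matrix.smul_mulVec (x r - y r) qg (σv r m u), hqg,
        Matrix.sub_mulVec (g.map (ofA r)) (g.map (ofY r)) (σv r m u),
        smul_add (x r - y r) ((g.map (ofY r)).mulVec hu₁) hu₃,
        h2, ← Matrix.mulVec_smul (g.map (ofY r)) (x r - y r) hu₁, h1,
        Matrix.mulVec_sub (g.map (ofY r)) (σv r m u) u]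
      have hσ : σv r m ((g.map (ofY r)).mulVec u + (x r - y r) • v) =
          (g.map (ofA r)).mulVec (σv r m u) :=
        sigmav_mulVec_add_smul r m g u v
      rw [hσ]
      abel
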